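/- If Γ is an inner ultrahomogeneous group, then Γ is not isomorphic to a direct product of two nontrivial groups. -/
import Mathlib


def InnerUltrahomogeneous (G : Type*) [Group G] : Prop :=
  ∀ (A B : Subgroup G), A.FG → B.FG → ∀ e : A ≃* B,
    ∃ g : G, ∀ a : A, g⁻¹ * (a : G) * g = ((e a : B) : G)

section Aux

variable {G : Type*} [Group G]

/-- If two elements have the same order, equal powers of the first give equal powers of
the second. -/
lemma pow_eq_transfer {x y : G} (hxy : orderOf x = orderOf y) {n m : ℤ}
    (h : x ^ n = x ^ m) : y ^ n = y ^ m := by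
  have h1 : x ^ (n - m) = 1 := by
    rw [zpow_sub, h, mul_inv_cancel]
  rw [← orderOf_dvd_iff_zpow_eq_one] at h1
  rw [hxy] at h1
  rw [orderOf_dvd_iff_zpow_eq_one] at h1
  have := (zpow_sub y n m).symm.trans h1
  rwa [mul_inv_eq_one] at this

private noncomputable def expOf {x : G} (w : Subgroup.zpowers x) : ℤ :=
  (Subgroup.mem_zpowers_iff.mp w.2).choose

private lemma expOf_spec {x : G} (w : Subgroup.zpowers x) : x ^ expOf w = (w : G) :=
  (Subgroup.mem_zpowers_iff.mp w.2).choose_spec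

/-- An isomorphism between the cyclic subgroups generated by elements of equal order,
sending a generator to a generator. -/
noncomputable def cyclicEquiv {x y : G} (hxy : orderOf x = orderOf y) :
    Subgroup.zpowers x ≃* Subgroup.zpowers y where
  toFun w := ⟨y ^ expOf w, Subgroup.zpow_mem _ (Subgroup.mem_zpowers y) _⟩
  invFun v := ⟨x ^ expOf v, Subgroup.zpow_mem _ (Subgroup.mem_zpowers x) _⟩
  left_inv w := by
    ext
    have h1 : y ^ expOf (⟨y ^ expOf w, Subgroup.zpow_mem _ (Subgroup.mem_zpowers y) _⟩ :
        Subgroup.zpowers y) = y ^ expOf w := expOf_spec _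
    have h2 : x ^ expOf (⟨y ^ expOf w, Subgroup.zpow_mem _ (Subgroup.mem_zpowers y) _⟩ :
        Subgroup.zpowers y) = x ^ expOf w := pow_eq_transfer hxy.symm h1
    simpa [h2] using expOf_spec w
  right_inv v := by
    ext
    have h1 : x ^ expOf (⟨x ^ expOf v, Subgroup.zpow_mem _ (Subgroup.mem_zpowers x) _⟩ :
        Subgroup.zpowers x) = x ^ expOf v := expOf_spec _
    have h2 : y ^ expOf (⟨x ^ expOf v, Subgroup.zpow_mem _ (Subgroup.mem_zpowers x) _⟩ :
        Subgroup.zpowers x) = y ^ expOf v := pow_eq_transfer hxy h1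
    simpa [h2] using expOf_spec v
  map_mul' w₁ w₂ := by
    ext
    have h1 : x ^ expOf (w₁ * w₂) = x ^ (expOf w₁ + expOf w₂) := by
      rw [expOf_spec, zpow_add, expOf_spec, expOf_spec]; rfl
    have h2 := pow_eq_transfer hxy h1
    simpa [zpow_add] using h2

lemma cyclicEquiv_gen {x y : G} (hxy : orderOf x = orderOf y) :
    ((cyclicEquiv hxy ⟨x, Subgroup.mem_zpowers x⟩ : Subgroup.zpowers y) : G) = y := by
  have h1 : x ^ expOf (⟨x, Subgroup.mem_zpowers x⟩ : Subgroup.zpowers x) = x ^ (1 : ℤ) := by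
    simpa using expOf_spec (⟨x, Subgroup.mem_zpowers x⟩ : Subgroup.zpowers x)
  have h2 := pow_eq_transfer hxy h1
  simpa [cyclicEquiv] using h2

lemma zpowers_fg (x : G) : (Subgroup.zpowers x).FG := by
  refine ⟨{x}, ?_⟩
  simp [Subgroup.zpowers_eq_closure]

/-- In an inner-ultrahomogeneous group, any two elements of the same order are conjugate. -/
lemma conj_of_orderOf_eq (h : InnerUltrahomogeneous G) {x y : G}
    (hxy : orderOf x = orderOf y) : ∃ g : G, g⁻¹ * x * g = y := by
  obtain ⟨g, hg⟩ := h (Subgroup.zpowers x) (Subgroup.zpowers y) (zpowers_fg x) (zpowers_fg y)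
    (cyclicEquiv hxy)
  refine ⟨g, ?_⟩
  have := hg ⟨x, Subgroup.mem_zpowers x⟩
  rwa [cyclicEquiv_gen hxy] at this

lemma fg_map {H : Subgroup G} {N : Type*} [Group N] (f : G →* N) (hH : H.FG) :
    (H.map f).FG := by
  classical
  obtain ⟨S, hS⟩ := hH
  exact ⟨S.image f, by rw [Finset.coe_image, ← MonoidHom.map_closure, hS]⟩

/-- Inner ultrahomogeneity transfers along isomorphisms. -/
lemma innerUH_of_mulEquiv {N : Type*} [Group N] (φ : G ≃* N)
    (h : InnerUltrahomogeneous G) : InnerUltrahomogeneous N := by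
  intro A B hA hB e
  obtain ⟨g, hg⟩ := h (A.map (φ.symm : N →* G)) (B.map (φ.symm : N →* G))
    (fg_map _ hA) (fg_map _ hB)
    ((φ.symm.subgroupMap A).symm.trans (e.trans (φ.symm.subgroupMap B)))
  refine ⟨φ g, fun a => ?_⟩
  have h0 := hg (φ.symm.subgroupMap A a)
  rw [MulEquiv.coe_subgroupMap_apply] at h0
  rw [MulEquiv.trans_apply, MulEquiv.symm_apply_apply, MulEquiv.trans_apply,
    MulEquiv.coe_subgroupMap_apply] at h0
  have h1 := congrArg φ h0
  simp only [map_mul, map_inv, MulEquiv.apply_symm_apply] at h1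
  exact h1

lemma inl_injective {G₁ G₂ : Type*} [Group G₁] [Group G₂] :
    Function.Injective (MonoidHom.inl G₁ G₂) := fun a b hab => congrArg Prod.fst hab

lemma inr_injective {G₁ G₂ : Type*} [Group G₁] [Group G₂] :
    Function.Injective (MonoidHom.inr G₁ G₂) := fun a b hab => congrArg Prod.snd hab

/-- The left factor of an inner-ultrahomogeneous product is inner ultrahomogeneous. -/
lemma innerUH_factor_left {G₁ G₂ : Type*} [Group G₁] [Group G₂]
    (h : InnerUltrahomogeneous (G₁ × G₂)) : InnerUltrahomogeneous G₁ := by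
  intro A B hA hB e
  set f := MonoidHom.inl G₁ G₂ with hf
  obtain ⟨g, hg⟩ := h (A.map f) (B.map f) (fg_map _ hA) (fg_map _ hB)
    ((A.equivMapOfInjective f inl_injective).symm.trans
      (e.trans (B.equivMapOfInjective f inl_injective)))
  refine ⟨g.1, fun a => ?_⟩
  have h0 := hg (A.equivMapOfInjective f inl_injective a)
  rw [Subgroup.coe_equivMapOfInjective_apply, MulEquiv.trans_apply, MulEquiv.symm_apply_apply,
    MulEquiv.trans_apply, Subgroup.coe_equivMapOfInjective_apply] at h0
  exact congrArg Prod.fst h0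

/-- Similarly for the right factor. -/
lemma innerUH_factor_right {G₁ G₂ : Type*} [Group G₁] [Group G₂]
    (h : InnerUltrahomogeneous (G₁ × G₂)) : InnerUltrahomogeneous G₂ := by
  intro A B hA hB e
  set f := MonoidHom.inr G₁ G₂ with hf
  obtain ⟨g, hg⟩ := h (A.map f) (B.map f) (fg_map _ hA) (fg_map _ hB)
    ((A.equivMapOfInjective f inr_injective).symm.trans
      (e.trans (B.equivMapOfInjective f inr_injective)))
  refine ⟨g.2, fun a => ?_⟩
  have h0 := hg (A.equivMapOfInjective f inr_injective a)
  rw [Subgroup.coe_equivMapOfInjective_apply, MulEquiv.trans_apply, MulEquiv.symm_apply_apply,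
    MulEquiv.trans_apply, Subgroup.coe_equivMapOfInjective_apply] at h0
  exact congrArg Prod.snd h0

lemma conj_pow_eq {g z : G} (hz : g⁻¹ * z * g = z⁻¹) (k : ℕ) :
    (g ^ k)⁻¹ * z * g ^ k = z ^ ((-1 : ℤ) ^ k) := by
  induction k with
  | zero => simp
  | succ k ih =>
    have : (g ^ (k + 1))⁻¹ * z * g ^ (k + 1) = g⁻¹ * ((g ^ k)⁻¹ * z * g ^ k) * g := by
      rw [pow_succ]
      group
    rw [this, ih]
    have hc : g⁻¹ * z ^ ((-1 : ℤ) ^ k) * g = (g⁻¹ * z * g) ^ ((-1 : ℤ) ^ k) := by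
      have := conj_zpow (i := ((-1 : ℤ) ^ k)) (a := g⁻¹) (b := z)
      simpa using this.symm
    rw [hc, hz, ← zpow_neg_one, ← zpow_mul, pow_succ]
    ring_nf

/-- A nontrivial torsion inner-ultrahomogeneous group contains an element of order 2. -/
lemma exists_orderOf_eq_two (h : InnerUltrahomogeneous G)
    (tor : ∀ x : G, IsOfFinOrder x) [Nontrivial G] : ∃ t : G, orderOf t = 2 := by
  obtain ⟨x, hx⟩ := exists_ne (1 : G)
  have hn : orderOf x ≠ 0 := (tor x).orderOf_pos.ne'
  have hn1 : orderOf x ≠ 1 := by simpa [orderOf_eq_one_iff] using hx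
  set n := orderOf x with hndef
  set p := n.minFac with hpdef
  have hp : p.Prime := Nat.minFac_prime hn1
  have hpd : p ∣ n := Nat.minFac_dvd n
  set z := x ^ (n / p) with hzdef
  have hnp0 : n / p ≠ 0 := by
    have := Nat.div_pos (Nat.le_of_dvd (Nat.pos_of_ne_zero hn) hpd) hp.pos
    omega
  have hz : orderOf z = p := by
    rw [hzdef, orderOf_pow' x hnp0, ← hndef,
      Nat.gcd_eq_right (Nat.div_dvd_of_dvd hpd), Nat.div_div_self hpd hn]
  by_cases hp2 : p = 2
  · exact ⟨z, by rw [hz, hp2]⟩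
  · have hodd : Odd p := hp.odd_of_ne_two hp2
    have hinv : orderOf z = orderOf z⁻¹ := (orderOf_inv z).symm
    obtain ⟨g, hg⟩ := conj_of_orderOf_eq h hinv
    set m := orderOf g with hmdef
    have hm0 : m ≠ 0 := (tor g).orderOf_pos.ne'
    have hkey := conj_pow_eq hg m
    have hgm : g ^ m = 1 := by rw [hmdef]; exact pow_orderOf_eq_one g
    rw [hgm] at hkey
    simp only [inv_one, one_mul, mul_one] at hkey
    have hmeven : Even m := by
      by_contra hme
      have hmo : Odd m := Nat.odd_iff.mpr (Nat.not_even_iff.mp hme)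
      rw [hmo.neg_one_pow] at hkey
      have hz2 : z = z⁻¹ := by simpa using hkey
      have hsq : z ^ (2 : ℕ) = 1 := by
        rw [pow_two]
        nth_rewrite 2 [hz2]
        exact mul_inv_cancel z
      have hdvd : orderOf z ∣ 2 := orderOf_dvd_of_pow_eq_one hsq
      rw [hz] at hdvd
      exact hp2 ((Nat.prime_dvd_prime_iff_eq hp Nat.prime_two).mp hdvd)
    obtain ⟨k, hk⟩ := hmeven
    have hk0 : k ≠ 0 := by rintro rfl; omega
    refine ⟨g ^ k, ?_⟩
    haveI : Fact (Nat.Prime 2) := ⟨Nat.prime_two⟩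
    apply orderOf_eq_prime
    · rw [← pow_mul]
      have hk2 : k * 2 = m := by omega
      rw [hk2]
      exact hgm
    · intro hgk
      have hd : m ∣ k := orderOf_dvd_of_pow_eq_one hgk
      have := Nat.le_of_dvd (Nat.pos_of_ne_zero hk0) hd
      omega

end Aux

theorem not_direct_product_of_innerUltrahomogeneous
    {Γ : Type*} [Group Γ] (h : InnerUltrahomogeneous Γ)
    (G₁ G₂ : Type*) [Group G₁] [Group G₂]
    (h₁ : Nontrivial G₁) (h₂ : Nontrivial G₂) :
    IsEmpty (Γ ≃* G₁ × G₂) := by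
  constructor
  intro φ
  have h' : InnerUltrahomogeneous (G₁ × G₂) := innerUH_of_mulEquiv φ h
  have hUH₁ : InnerUltrahomogeneous G₁ := innerUH_factor_left h'
  have hUH₂ : InnerUltrahomogeneous G₂ := innerUH_factor_right h'
  -- torsion of factors
  have tor₁ : ∀ x : G₁, IsOfFinOrder x := by
    intro x
    by_contra hx
    obtain ⟨y, hy⟩ := exists_ne (1 : G₂)
    have hord : orderOf ((x, 1) : G₁ × G₂) = orderOf ((x, y) : G₁ × G₂) := by
      have h0 : orderOf x = 0 := orderOf_eq_zero hx
      rw [Prod.orderOf_mk, Prod.orderOf_mk]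
      simp [h0, Nat.lcm]
    obtain ⟨g, hg⟩ := conj_of_orderOf_eq h' hord
    have := congrArg Prod.snd hg
    simp at this
    exact hy this.symm
  have tor₂ : ∀ x : G₂, IsOfFinOrder x := by
    intro x
    by_contra hx
    obtain ⟨y, hy⟩ := exists_ne (1 : G₁)
    have hord : orderOf ((1, x) : G₁ × G₂) = orderOf ((y, x) : G₁ × G₂) := by
      have h0 : orderOf x = 0 := orderOf_eq_zero hx
      rw [Prod.orderOf_mk, Prod.orderOf_mk]
      simp [h0, Nat.lcm]
    obtain ⟨g, hg⟩ := conj_of_orderOf_eq h' hord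
    have := congrArg Prod.fst hg
    simp at this
    exact hy this.symm
  obtain ⟨t₁, ht₁⟩ := exists_orderOf_eq_two hUH₁ tor₁
  obtain ⟨t₂, ht₂⟩ := exists_orderOf_eq_two hUH₂ tor₂
  have hord : orderOf ((t₁, 1) : G₁ × G₂) = orderOf ((t₁, t₂) : G₁ × G₂) := by
    rw [Prod.orderOf_mk, Prod.orderOf_mk]
    simp [ht₁, ht₂]
  obtain ⟨g, hg⟩ := conj_of_orderOf_eq h' hord
  have := congrArg Prod.snd hg
  simp at this
  rw [← this] at ht₂
  simp at ht₂
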